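/- Let I be a closed unbounded set of ordinals with increasing enumeration ν ↦ κ_ν, and let B ⊆ I be a nonempty limit suitable set. Then sup B ∉ B (in particular, a nonempty limit suitable set is never closed); moreover sup B = κ_{ν+ω} for some ordinal ν, and sup B has cofinality ω. -/

import Mathlib

open Set

noncomputable section

/-- `l` is a limit point of the set `S` of ordinals: `l > 0` and `sup (S ∩ l) = l`. -/
def IsLimitPoint (S : Set Ordinal) (l : Ordinal) : Prop :=
  0 < l ∧ sSup (S ∩ Iio l) = l

/-- A set of ordinals is closed if it contains all of its limit points. -/
def IsClosedSet (S : Set Ordinal) : Prop :=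
  ∀ l, IsLimitPoint S l → l ∈ S

/-- A set of ordinals is unbounded (in the class of all ordinals). -/
def IsUnboundedSet (S : Set Ordinal) : Prop :=
  ∀ a, ∃ b ∈ S, a < b

/-- `B` is a suitable subset of `I`: it is a countable closed subset of `I`, every member of `B`
which is a limit point of `I` of countable cofinality is a limit point of `B`, and `B` is closed
under immediate predecessors in `I`. -/
def Suitable (I B : Set Ordinal) : Prop :=
  B ⊆ I ∧ B.Countable ∧ IsClosedSet B ∧
  (∀ β ∈ B, IsLimitPoint I β → β.cof ≤ Cardinal.aleph0 → IsLimitPoint B β) ∧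
  (∀ β ∈ B, ∀ m, IsGreatest (I ∩ Iio β) m → m ∈ B)

/-- `G` is a gap of `B` (relative to `I`): a maximal nonempty convex subset of `I \ B`. -/
def IsGap (I B G : Set Ordinal) : Prop :=
  G.Nonempty ∧ G ⊆ I \ B ∧
  (∀ x ∈ G, ∀ y ∈ G, ∀ z ∈ I \ B, x ≤ z → z ≤ y → z ∈ G) ∧
  ∀ G', G ⊆ G' → G' ⊆ I \ B →
    (∀ x ∈ G', ∀ y ∈ G', ∀ z ∈ I \ B, x ≤ z → z ≤ y → z ∈ G') → G' = G

/-- The foot `λ` of a gap `G` of `B`: `sup({0} ∪ {β ∈ B : β < inf G})`. -/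
def GapFoot (B G : Set Ordinal) : Ordinal :=
  sSup (insert 0 {β ∈ B | β < sInf G})

/-- `B` is a limit suitable subset of `I`. -/
def LimitSuitable (I B : Set Ordinal) : Prop :=
  Suitable I (B ∪ {l | IsLimitPoint B l}) ∧
  ∀ G, IsGap I B G →
    ((IsUnboundedSet G ∧ G = I ∩ Ici (GapFoot B G)) ∨
     (∃ δ, IsLeast {β ∈ B | ∀ g ∈ G, g < β} δ ∧
        IsLimitPoint I δ ∧ Cardinal.aleph0 < δ.cof ∧
        G = I ∩ Ico (GapFoot B G) δ)) ∧
    (GapFoot B G ≠ 0 →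
      ∃ ν : Ordinal, GapFoot B G = Ordinal.enumOrd I (ν + Ordinal.omega0))

/-- If `B` is a nonempty limit suitable subset of `I`, then `sup B ∉ B` (so `B` is not closed),
`sup B = κ_{ν+ω}` for some ordinal `ν`, and `sup B` has cofinality `ω`. -/
theorem stmt6 (I B : Set Ordinal) (hIcl : IsClosedSet I) (hIunb : IsUnboundedSet I)
    (hB : LimitSuitable I B) (hne : B.Nonempty) :
    sSup B ∉ B ∧ (∃ ν : Ordinal, sSup B = Ordinal.enumOrd I (ν + Ordinal.omega0)) ∧
    (sSup B).cof = Cardinal.aleph0 := by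
  classical
  obtain ⟨hsuit, hgap⟩ := hB
  have hBI : B ⊆ I := fun x hx => hsuit.1 (Or.inl hx)
  have hBcnt : B.Countable := hsuit.2.1.mono subset_union_left
  have hBsub := hBcnt.to_subtype
  have hBdd : BddAbove B := Ordinal.bddAbove_of_small (s := B)
  have hInb : ¬ BddAbove I := by
    rintro ⟨a, ha⟩
    obtain ⟨b, hbI, hab⟩ := hIunb a
    exact absurd (ha hbI) (not_le.2 hab)
  -- G := I \ B is a gap
  set G : Set Ordinal := I \ B with hGdef
  have hGne : G.Nonempty := by
    obtain ⟨b, hbI, hb⟩ := hIunb (sSup B)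
    refine ⟨b, hbI, fun hbB => ?_⟩
    exact absurd (le_csSup hBdd hbB) (not_le.2 hb)
  have hGgap : IsGap I B G := by
    refine ⟨hGne, Subset.rfl, fun x _ y _ z hz _ _ => hz, fun G' h1 h2 _ => subset_antisymm h2 h1⟩
  obtain ⟨hdisj, hfoot⟩ := hgap G hGgap
  -- kill the second disjunct
  have hleft : IsUnboundedSet G ∧ G = I ∩ Ici (GapFoot B G) := by
    rcases hdisj with h | ⟨δ, ⟨⟨hδB, hδub⟩, _⟩, _, _, _⟩
    · exact h
    · exfalso
      obtain ⟨b, hbI, hb⟩ := hIunb (max δ (sSup B))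
      have hbB : b ∉ B := fun hbB =>
        absurd (le_csSup hBdd hbB) (not_le.2 ((le_max_right _ _).trans_lt hb))
      exact absurd (hδub b ⟨hbI, hbB⟩) (not_lt.2 ((le_max_left _ _).trans hb.le))
  set lam : Ordinal := GapFoot B G with hlamdef
  -- B = I ∩ Iio lam
  have hBeq : B = I ∩ Iio lam := by
    ext x
    constructor
    · intro hx
      refine ⟨hBI hx, ?_⟩
      by_contra hxl
      have : x ∈ G := hleft.2 ▸ ⟨hBI hx, mem_Ici.2 (not_lt.1 hxl)⟩
      exact this.2 hx
    · rintro ⟨hxI, hxl⟩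
      by_contra hxB
      have : x ∈ I ∩ Ici lam := hleft.2 ▸ (⟨hxI, hxB⟩ : x ∈ G)
      exact absurd (mem_Ici.1 this.2) (not_le.2 hxl)
  have hlam0 : lam ≠ 0 := by
    obtain ⟨β, hβ⟩ := hne
    have : β < lam := (hBeq ▸ hβ).2
    exact fun h => absurd (h ▸ this) (not_lt_of_ge (zero_le (a := β)))
  obtain ⟨ν, hν⟩ := hfoot hlam0
  -- the ω-sequence below lam
  set f : ℕ → Ordinal := fun n => Ordinal.enumOrd I (ν + n) with hfdef
  have hmono := Ordinal.enumOrd_strictMono hInb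
  have hfI : ∀ n, f n ∈ I := fun n => Ordinal.enumOrd_mem hInb _
  have hflt : ∀ n, f n < lam := fun n => by
    rw [hν]
    exact hmono ((add_lt_add_iff_left ν).2 (Ordinal.nat_lt_omega0 n))
  have hfmono : StrictMono f := fun m n h => by
    exact hmono ((add_lt_add_iff_left ν).2 (by exact_mod_cast h : (m : Ordinal) < n))
  set μ : Ordinal := ⨆ n, f n with hμdef
  have hfμ : ∀ n, f n ≤ μ := fun n => Ordinal.le_iSup f n
  have hfltμ : ∀ n, f n < μ := fun n => (hfmono (Nat.lt_succ_self n)).trans_le (hfμ (n + 1))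
  -- μ is a limit point of I, hence in I
  have hμI : μ ∈ I := by
    apply hIcl
    constructor
    · exact (zero_le (a := f 0)).trans_lt (hfltμ 0)
    · apply le_antisymm
      · exact csSup_le ⟨f 0, hfI 0, hfltμ 0⟩ fun b hb => hb.2.le
      · exact Ordinal.iSup_le fun n =>
          le_csSup ((bddAbove_Iio).mono inter_subset_right) ⟨hfI n, hfltμ n⟩
  -- μ = lam
  have hμlam : μ = lam := by
    apply le_antisymm
    · exact Ordinal.iSup_le fun n => (hflt n).le
    · have : μ ∈ range (Ordinal.enumOrd I) := by rw [Ordinal.range_enumOrd hInb]; exact hμI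
      obtain ⟨ξ, hξ⟩ := this
      have hξge : ν + Ordinal.omega0 ≤ ξ := by
        rw [Ordinal.add_le_iff_of_isSuccLimit Ordinal.isSuccLimit_omega0]
        intro b hb
        obtain ⟨n, rfl⟩ := Ordinal.lt_omega0.1 hb
        exact le_of_lt (hmono.lt_iff_lt.1 (hξ ▸ hfltμ n))
      calc lam = Ordinal.enumOrd I (ν + Ordinal.omega0) := hν
        _ ≤ Ordinal.enumOrd I ξ := hmono.monotone hξge
        _ = μ := hξ
  -- sSup B = lam
  have hsup : sSup B = lam := by
    apply le_antisymm
    · exact csSup_le hne (fun b hb => (hBeq ▸ hb).2.le)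
    · rw [← hμlam]
      exact Ordinal.iSup_le fun n => le_csSup hBdd (hBeq ▸ ⟨hfI n, hμlam ▸ hflt n⟩)
  refine ⟨?_, ⟨ν, hsup.trans hν⟩, ?_⟩
  · rw [hsup, hBeq]
    exact fun h => absurd h.2 (lt_irrefl lam)
  · rw [hsup, ← hμlam]
    apply le_antisymm
    · have h1 : ∀ n, f n < iSup f := hfltμ
      have := Ordinal.cof_iSup_le_lift h1
      rwa [Cardinal.mk_nat, Cardinal.lift_aleph0] at this
    · rw [Ordinal.aleph0_le_cof]
      constructor
      · exact fun h => h.not_lt (hfltμ 0)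
      · intro a ha
        obtain ⟨n, hab⟩ := Ordinal.lt_iSup_iff.1 ha.lt
        exact ha.2 hab (hfltμ n)
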